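/- Let G be a finite group, C a union of G-conjugacy classes, and suppose C is a union of Γ_K-conjugacy classes for a field K with ℚ ≤ K ≤ ℚ(ζ_m), m the exponent of G. Then for every irreducible complex character χ of G, the eigenvalue (1/χ(1))·Σ_{x∈C} χ(x) lies in K. -/

import Mathlib

noncomputable section
open IntermediateField

theorem powApply' {W : Type*} [AddCommGroup W] [Module ℂ W]
    (f : Module.End ℂ W) {μ : ℂ} {v : W} (hv : f v = μ • v) (t : ℕ) :
    (f ^ t) v = μ ^ t • v := by
  induction t with
  | zero => simp
  | succ t ih =>
      rw [pow_succ, Module.End.mul_apply, hv, map_smul, ih, smul_smul, mul_comm, pow_succ]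

open Polynomial in
theorem traceA' {W : Type*} [AddCommGroup W] [Module ℂ W] [FiniteDimensional ℂ W]
    (f : Module.End ℂ W) {m : ℕ} (hm : m ≠ 0) (hf : f ^ m = 1) :
    ∃ (s : Finset ℂ) (d : ℂ → ℕ), (∀ μ ∈ s, μ ^ m = 1) ∧
      ∀ t, LinearMap.trace ℂ W (f ^ t) = ∑ μ ∈ s, μ ^ t * (d μ : ℂ) := by
  have hsq : Squarefree (X ^ m - C (1:ℂ)) :=
    (Polynomial.separable_X_pow_sub_C 1 (Nat.cast_ne_zero.mpr hm) one_ne_zero).squarefree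
  have hss : f.IsSemisimple := by
    apply Module.End.isSemisimple_of_squarefree_aeval_eq_zero hsq
    simpa [sub_eq_zero] using hf
  have hfss := hss.isFinitelySemisimple
  have hsup : ⨆ μ : ℂ, f.eigenspace μ = ⊤ := by
    have := Module.End.iSup_maxGenEigenspace_eq_top f
    simpa [hfss.maxGenEigenspace_eq_eigenspace] using this
  have hind := f.eigenspaces_iSupIndep
  have hint : DirectSum.IsInternal (fun μ : ℂ => f.eigenspace μ) :=
    DirectSum.isInternal_submodule_of_iSupIndep_of_iSup_eq_top hind hsup
  have hroot : ∀ μ : ℂ, f.eigenspace μ ≠ ⊥ → μ ^ m = 1 := by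
    intro μ hμ
    obtain ⟨v, hv, hv0⟩ := Submodule.exists_mem_ne_zero_of_ne_bot hμ
    rw [Module.End.mem_eigenspace_iff] at hv
    have h1 : (f ^ m) v = μ ^ m • v := powApply' f hv m
    rw [hf] at h1
    have h2 : (μ ^ m - 1) • v = 0 := by
      rw [sub_smul, one_smul, ← h1]; simp
    rcases smul_eq_zero.mp h2 with h | h
    · exact sub_eq_zero.mp h
    · exact absurd h hv0
  have hfin : {μ : ℂ | f.eigenspace μ ≠ ⊥}.Finite := by
    apply Set.Finite.subset ((Polynomial.nthRoots m (1:ℂ)).toFinset : Finset ℂ).finite_toSet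
    intro μ hμ
    simp only [Finset.coe_sort_coe, Finset.mem_coe, Multiset.mem_toFinset,
      Polynomial.mem_nthRoots (Nat.pos_of_ne_zero hm)]
    exact hroot μ hμ
  refine ⟨hfin.toFinset, fun μ => Module.finrank ℂ (f.eigenspace μ), ?_, ?_⟩
  · intro μ hμ
    exact hroot μ (hfin.mem_toFinset.mp hμ)
  intro t
  have hmap : ∀ μ : ℂ, Set.MapsTo (f ^ t) (f.eigenspace μ) (f.eigenspace μ) := by
    intro μ v hv
    rw [SetLike.mem_coe, Module.End.mem_eigenspace_iff] at hv ⊢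
    rw [powApply' f hv t, map_smul, hv, smul_smul, smul_smul, mul_comm]
  rw [LinearMap.trace_eq_sum_trace_restrict' hint hfin hmap]
  refine Finset.sum_congr rfl fun μ hμ => ?_
  have hres : (f ^ t).restrict (hmap μ) =
      (μ ^ t : ℂ) • (LinearMap.id : f.eigenspace μ →ₗ[ℂ] f.eigenspace μ) := by
    ext ⟨v, hv⟩
    rw [Module.End.mem_eigenspace_iff] at hv
    simp [LinearMap.restrict_apply, powApply' f hv t]
    exact powApply' f hv t
  rw [hres, map_smul]
  simp [LinearMap.trace_id, mul_comm]

/-- `t` lies in `Γ_K`. -/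
def GammaK (ζ : ℂ) (K : IntermediateField ℚ ℂ) (t : ℕ) : Prop :=
  ∃ σ : ℚ⟮ζ⟯ ≃ₐ[ℚ] ℚ⟮ζ⟯,
    (∀ (x : ℂ) (hx : x ∈ ℚ⟮ζ⟯), x ∈ K → (σ ⟨x, hx⟩ : ℂ) = x) ∧
    (σ ⟨ζ, IntermediateField.mem_adjoin_simple_self ℚ ζ⟩ : ℂ) = ζ ^ t

/-- `Γ_K`-conjugacy. -/
def GammaConj {G : Type} [Group G] (ζ : ℂ) (K : IntermediateField ℚ ℂ) (g h : G) : Prop :=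
  ∃ t : ℕ, GammaK ζ K t ∧ IsConj g (h ^ t)

set_option maxHeartbeats 2000000 in
/-- If `C` is a union of `Γ_K`-conjugacy classes, then for every irreducible character `χ`
the eigenvalue `(1/χ(1)) ∑_{x ∈ C} χ(x)` of `Cay(G, C)` lies in `K`. -/
theorem stmt14 {G : Type} [Group G] [Fintype G] (C : Finset G)
    (hC : ∀ g ∈ C, ∀ h : G, h * g * h⁻¹ ∈ C)
    (ζ : ℂ) (hζ : IsPrimitiveRoot ζ (Monoid.exponent G))
    (K : IntermediateField ℚ ℂ) (hK : K ≤ ℚ⟮ζ⟯)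
    (hCK : ∀ g ∈ C, ∀ h : G, GammaConj ζ K h g → h ∈ C)
    (V : FDRep ℂ G) (hV : CategoryTheory.Simple V) :
    (∑ x ∈ C, V.character x) / V.character 1 ∈ K := by
  classical
  set m := Monoid.exponent G with hmdef
  have hm : m ≠ 0 := Monoid.exponent_ne_zero_of_finite
  haveI : NeZero m := ⟨hm⟩
  -- roots of unity lie in ℚ⟮ζ⟯
  have hmem : ∀ μ : ℂ, μ ^ m = 1 → μ ∈ ℚ⟮ζ⟯ := by
    intro μ hμ
    obtain ⟨i, -, hi⟩ := hζ.eq_pow_of_pow_eq_one hμ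
    exact hi ▸ pow_mem (mem_adjoin_simple_self ℚ ζ) i
  -- character expansion
  have charB : ∀ g : G, ∃ (s : Finset ℂ) (d : ℂ → ℕ), (∀ μ ∈ s, μ ^ m = 1) ∧
      ∀ t, V.character (g ^ t) = ∑ μ ∈ s, μ ^ t * (d μ : ℂ) := by
    intro g
    have h1 : (V.ρ g) ^ m = 1 := by
      rw [← map_pow, Monoid.pow_exponent_eq_one g, map_one]
    obtain ⟨s, d, hs, hsum⟩ := traceA' (V.ρ g) hm h1
    refine ⟨s, d, hs, fun t => ?_⟩
    have : V.character (g ^ t) = LinearMap.trace ℂ V ((V.ρ g) ^ t) := by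
      rw [FDRep.character, map_pow]
    rw [this, hsum t]
  have hcharL : ∀ g : G, V.character g ∈ ℚ⟮ζ⟯ := by
    intro g
    obtain ⟨s, d, hs, hsum⟩ := charB g
    have h1 := hsum 1
    rw [pow_one] at h1
    rw [h1]
    refine sum_mem fun μ hμ => ?_
    rw [pow_one]
    exact mul_mem (hmem μ (hs μ hμ)) (IntermediateField.natCast_mem _ _)
  -- Galois setup
  haveI hGal : IsGalois ℚ ℚ⟮ζ⟯ := by
    have hpne : (Polynomial.X ^ m - Polynomial.C (1:ℚ) : Polynomial ℚ) ≠ 0 := (Polynomial.monic_X_pow_sub_C 1 hm).ne_zero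
    have hroot : ∀ x : ℂ, x ∈ (Polynomial.X ^ m - Polynomial.C (1:ℚ) : Polynomial ℚ).rootSet ℂ ↔ x ^ m = 1 := by
      intro x
      rw [Polynomial.mem_rootSet]
      constructor
      · rintro ⟨-, h⟩; simpa [sub_eq_zero] using h
      · intro h; exact ⟨hpne, by simpa [sub_eq_zero] using h⟩
    have hLS : adjoin ℚ ((Polynomial.X ^ m - Polynomial.C (1:ℚ) : Polynomial ℚ).rootSet ℂ) = ℚ⟮ζ⟯ := by
      apply le_antisymm
      · rw [adjoin_le_iff]
        intro x hx
        exact hmem x ((hroot x).mp hx)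
      · rw [adjoin_le_iff]
        intro x hx
        rw [Set.mem_singleton_iff] at hx
        exact hx ▸ subset_adjoin ℚ _ ((hroot ζ).mpr hζ.pow_eq_one)
    have hsplit : ((Polynomial.X ^ m - Polynomial.C (1:ℚ) : Polynomial ℚ).map (algebraMap ℚ ℂ)).Splits :=
      IsAlgClosed.splits _
    haveI hSF : Polynomial.IsSplittingField ℚ ℚ⟮ζ⟯ (Polynomial.X ^ m - Polynomial.C (1:ℚ)) := by
      rw [← hLS]
      exact IntermediateField.adjoin_rootSet_isSplittingField hsplit
    exact IsGalois.of_separable_splitting_field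
      (Polynomial.separable_X_pow_sub_C 1 (Nat.cast_ne_zero.mpr hm) one_ne_zero)
  haveI hFD : FiniteDimensional ℚ ℚ⟮ζ⟯ := by
    refine IntermediateField.adjoin.finiteDimensional ?_
    refine ⟨Polynomial.X ^ m - Polynomial.C (1:ℚ), Polynomial.monic_X_pow_sub_C 1 hm, ?_⟩
    simp [sub_eq_zero, hζ.pow_eq_one]
  -- the σ-equivariance of characters
  set zL : ℚ⟮ζ⟯ := AdjoinSimple.gen ℚ ζ with hzL
  have hgenm : zL ^ m = 1 := by
    apply Subtype.ext
    simpa [hzL] using hζ.pow_eq_one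
  have hsigma : ∀ (σ : ℚ⟮ζ⟯ ≃ₐ[ℚ] ℚ⟮ζ⟯) (t : ℕ), σ zL = zL ^ t →
      ∀ g : G, σ ⟨V.character g, hcharL g⟩ = ⟨V.character (g ^ t), hcharL _⟩ := by
    intro σ t hσt g
    have hw : ∀ w : ℚ⟮ζ⟯, (w : ℂ) ^ m = 1 → σ w = w ^ t := by
      intro w hwm
      obtain ⟨i, -, hi⟩ := hζ.eq_pow_of_pow_eq_one hwm
      have hwz : w = zL ^ i := by
        apply Subtype.ext
        simpa [hzL] using hi.symm
      rw [hwz, map_pow, hσt, ← pow_mul, ← pow_mul, mul_comm]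
    obtain ⟨s, d, hs, hsum⟩ := charB g
    have coeSum : ∀ (F : {μ // μ ∈ s} → ℚ⟮ζ⟯),
        ((∑ μ ∈ s.attach, F μ : ℚ⟮ζ⟯) : ℂ) = ∑ μ ∈ s.attach, (F μ : ℂ) := by
      intro F
      simpa using map_sum (ℚ⟮ζ⟯).val F s.attach
    set w : {μ // μ ∈ s} → ℚ⟮ζ⟯ := fun μ => ⟨μ.1, hmem μ.1 (hs μ.1 μ.2)⟩ with hwdef
    have key : (⟨V.character g, hcharL g⟩ : ℚ⟮ζ⟯) =
        ∑ μ ∈ s.attach, (d μ.1 : ℚ⟮ζ⟯) * w μ := by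
      apply Subtype.ext
      rw [coeSum]
      have h1 := hsum 1
      rw [pow_one] at h1
      show V.character g = _
      rw [h1, ← Finset.sum_attach s (fun μ => μ ^ 1 * (d μ : ℂ))]
      refine Finset.sum_congr rfl fun μ _ => ?_
      push_cast [hwdef]
      ring
    have key2 : σ (⟨V.character g, hcharL g⟩ : ℚ⟮ζ⟯) =
        ∑ μ ∈ s.attach, (d μ.1 : ℚ⟮ζ⟯) * (w μ) ^ t := by
      rw [key, map_sum]
      refine Finset.sum_congr rfl fun μ _ => ?_
      rw [map_mul, map_natCast, hw (w μ) (by simpa [hwdef] using hs μ.1 μ.2)]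
    apply Subtype.ext
    rw [key2, coeSum]
    show _ = V.character (g ^ t)
    rw [hsum t, ← Finset.sum_attach s (fun μ => μ ^ t * (d μ : ℂ))]
    refine Finset.sum_congr rfl fun μ _ => ?_
    push_cast [hwdef]
    ring
  -- main membership claim
  have hSK : (∑ x ∈ C, V.character x) ∈ K := by
    have hsumL : (∑ x ∈ C, V.character x) ∈ ℚ⟮ζ⟯ := sum_mem fun x _ => hcharL x
    set E' : IntermediateField ℚ ℚ⟮ζ⟯ := (IntermediateField.inclusion hK).fieldRange with hE'
    set sL : ℚ⟮ζ⟯ := ⟨_, hsumL⟩ with hsL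
    have hfix : ∀ σ : ℚ⟮ζ⟯ ≃ₐ[ℚ] ℚ⟮ζ⟯, σ ∈ E'.fixingSubgroup → σ sL = sL := by
      intro σ hσ
      have hfixK : ∀ (τ : ℚ⟮ζ⟯ ≃ₐ[ℚ] ℚ⟮ζ⟯), τ ∈ E'.fixingSubgroup →
          ∀ (x : ℂ) (hx : x ∈ ℚ⟮ζ⟯), x ∈ K → (τ ⟨x, hx⟩ : ℂ) = x := by
        intro τ hτ x hx hxK
        have hmem' : (⟨x, hx⟩ : ℚ⟮ζ⟯) ∈ E' := ⟨⟨x, hxK⟩, rfl⟩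
        rw [(IntermediateField.mem_fixingSubgroup_iff E' τ).mp hτ _ hmem']
      have hgen : ∀ τ : ℚ⟮ζ⟯ ≃ₐ[ℚ] ℚ⟮ζ⟯, ∃ r : ℕ, τ zL = zL ^ r := by
        intro τ
        have h0 : (τ zL) ^ m = 1 := by rw [← map_pow, hgenm, map_one]
        have h1 : ((τ zL : ℚ⟮ζ⟯) : ℂ) ^ m = 1 := by
          exact_mod_cast congrArg (Subtype.val) h0
        obtain ⟨r, -, hr⟩ := hζ.eq_pow_of_pow_eq_one h1
        refine ⟨r, Subtype.ext ?_⟩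
        simpa [hzL] using hr.symm
      obtain ⟨t, ht⟩ := hgen σ
      obtain ⟨u, hu⟩ := hgen σ.symm
      have hgen1 : zL ^ (u * t) = zL ^ 1 := by
        rw [pow_one, pow_mul, ← hu, ← map_pow, ← ht, AlgEquiv.symm_apply_apply]
      have hmodut : u * t ≡ 1 [MOD m] := by
        have hc : ζ ^ (u * t) = ζ ^ 1 := by
          have := congrArg Subtype.val hgen1
          push_cast at this
          simpa [hzL] using this
        have hζu := hζ.isUnit_unit hm
        have hcu : ((hζ.isUnit hm).unit) ^ (u * t)
            = ((hζ.isUnit hm).unit) ^ 1 := by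
          apply Units.ext
          simpa using hc
        have := pow_eq_pow_iff_modEq.mp hcu
        rwa [← hζu.eq_orderOf] at this
      have hmodtu : t * u ≡ 1 [MOD m] := by rwa [mul_comm] at hmodut
      -- GammaK facts
      have hGKt : GammaK ζ K t :=
        ⟨σ, fun x hx hxK => hfixK σ hσ x hx hxK, by
          rw [show (⟨ζ, IntermediateField.mem_adjoin_simple_self ℚ ζ⟩ : ℚ⟮ζ⟯) = zL from rfl,
            ht]; push_cast [hzL]; simp⟩
      have hσsymm : σ.symm ∈ E'.fixingSubgroup := by
        have := E'.fixingSubgroup.inv_mem hσ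
        rwa [show σ⁻¹ = σ.symm from rfl] at this
      have hGKu : GammaK ζ K u :=
        ⟨σ.symm, fun x hx hxK => hfixK σ.symm hσsymm x hx hxK, by
          rw [show (⟨ζ, IntermediateField.mem_adjoin_simple_self ℚ ζ⟩ : ℚ⟮ζ⟯) = zL from rfl,
            hu]; push_cast [hzL]; simp⟩
      have hCt : ∀ x ∈ C, x ^ t ∈ C := fun x hx => hCK x hx _ ⟨t, hGKt, IsConj.refl _⟩
      have hCu : ∀ x ∈ C, x ^ u ∈ C := fun x hx => hCK x hx _ ⟨u, hGKu, IsConj.refl _⟩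
      have hputu : ∀ x : G, (x ^ t) ^ u = x := by
        intro x
        rw [← pow_mul]
        conv_rhs => rw [← pow_one x]
        exact pow_eq_pow_iff_modEq.mpr (hmodtu.of_dvd (Monoid.order_dvd_exponent x))
      have hpuut : ∀ x : G, (x ^ u) ^ t = x := by
        intro x
        rw [← pow_mul]
        conv_rhs => rw [← pow_one x]
        exact pow_eq_pow_iff_modEq.mpr (hmodut.of_dvd (Monoid.order_dvd_exponent x))
      have hsplit : sL = ∑ x ∈ C, (⟨V.character x, hcharL x⟩ : ℚ⟮ζ⟯) := by
        apply Subtype.ext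
        exact (map_sum (ℚ⟮ζ⟯).val (fun x => (⟨V.character x, hcharL x⟩ : ℚ⟮ζ⟯)) C).symm
      have c1 : ((∑ x ∈ C, (⟨V.character (x ^ t), hcharL _⟩ : ℚ⟮ζ⟯) : ℚ⟮ζ⟯) : ℂ)
          = ∑ x ∈ C, V.character (x ^ t) := by
        simpa using map_sum (ℚ⟮ζ⟯).val (fun x => (⟨V.character (x ^ t), hcharL _⟩ : ℚ⟮ζ⟯)) C
      have c2 : ((∑ x ∈ C, (⟨V.character x, hcharL x⟩ : ℚ⟮ζ⟯) : ℚ⟮ζ⟯) : ℂ)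
          = ∑ x ∈ C, V.character x := by
        simpa using map_sum (ℚ⟮ζ⟯).val (fun x => (⟨V.character x, hcharL x⟩ : ℚ⟮ζ⟯)) C
      rw [hsplit, map_sum]
      rw [Finset.sum_congr rfl fun x _ => hsigma σ t ht x]
      apply Subtype.ext
      rw [c1, c2]
      exact Finset.sum_nbij' (fun x => x ^ t) (fun x => x ^ u) hCt hCu
        (fun x _ => hputu x) (fun x _ => hpuut x) (fun x _ => rfl)
    have hfixed : sL ∈ IntermediateField.fixedField E'.fixingSubgroup := by
      rintro ⟨σ, hσ⟩
      exact hfix σ hσ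
    rw [IsGalois.fixedField_fixingSubgroup E'] at hfixed
    obtain ⟨y, hy⟩ := hfixed
    have hyc : (y : ℂ) = ∑ x ∈ C, V.character x := by
      have := congrArg (Subtype.val) hy
      simpa [IntermediateField.coe_inclusion] using this
    rw [← hyc]
    exact y.2
  rw [FDRep.char_one]
  exact div_mem hSK (IntermediateField.natCast_mem K _)
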